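/- Let G be a finite tree with at least 2 vertices and let c be the maximum size of a core of G. Then the star cover rate s(G) satisfies s(G) ≤ 2 − 1/c. -/

import Mathlib

open scoped Classical

/-- A tree core: `X` induces a connected subgraph and every vertex of `X` has a
neighbor outside `X`. -/
def IsTreeCore {V : Type*} (G : SimpleGraph V) (X : Finset V) : Prop :=
  (G.induce (X : Set V)).Connected ∧ ∀ x ∈ X, ∃ y, y ∉ X ∧ G.Adj x y

/-- A star subgraph of `G`: a center vertex with a nonempty set of neighbors. -/
structure GraphStar {V : Type*} (G : SimpleGraph V) where
  center : V
  leaves : Finset V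
  nonempty : leaves.Nonempty
  adj : ∀ u ∈ leaves, G.Adj center u

/-- The star contains the vertex `v`. -/
def GraphStar.memV {V : Type*} {G : SimpleGraph V} (S : GraphStar G) (v : V) : Prop :=
  v = S.center ∨ v ∈ S.leaves

/-- The star contains the edge `uv`. -/
def GraphStar.memE {V : Type*} {G : SimpleGraph V} (S : GraphStar G) (u v : V) : Prop :=
  (u = S.center ∧ v ∈ S.leaves) ∨ (v = S.center ∧ u ∈ S.leaves)

/-- The star cover rate of `G`: the infimum, over all fractional star packings
(positively weighted finite collections of stars) in which every edge gets
total weight at least 1, of the maximum total vertex weight. -/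
noncomputable def starCoverRate {V : Type*} [Fintype V] (G : SimpleGraph V) : ℝ :=
  sInf { r : ℝ |
    ∃ (n : ℕ) (st : Fin n → GraphStar G) (w : Fin n → ℝ),
      (∀ i, 0 < w i) ∧
      (∀ u v, G.Adj u v → 1 ≤ ∑ i, (if (st i).memE u v then w i else 0)) ∧
      (∀ x : V, ∑ i, (if (st i).memV x then w i else 0) ≤ r) }

set_option linter.unusedSectionVars false
set_option linter.unusedVariables false
set_option maxHeartbeats 1000000

namespace StarPf

variable {V : Type*} [Fintype V] {G : SimpleGraph V}

variable (G) in
noncomputable def children (r v : V) : Finset V :=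
  (G.neighborFinset v).filter (fun u => G.dist r u = G.dist r v + 1)

variable (G) in
def Desc (r u w : V) : Prop := G.dist r w = G.dist r u + G.dist u w

lemma mem_children {r u v : V} :
    u ∈ children G r v ↔ G.Adj v u ∧ G.dist r u = G.dist r v + 1 := by
  simp [children, SimpleGraph.mem_neighborFinset]

section
variable (hG : G.IsTree) (r : V)
include hG

lemma dist_lt_cardX (v : V) : G.dist r v < Fintype.card V := by
  obtain ⟨p, hp, hl⟩ := hG.isConnected.exists_path_of_dist r v
  calc G.dist r v = p.length := hl.symm
    _ < Fintype.card V := hp.length_lt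

lemma adj_distX {u v : V} (h : G.Adj u v) :
    G.dist r v = G.dist r u + 1 ∨ G.dist r u = G.dist r v + 1 := by
  have hle1 : G.dist r v ≤ G.dist r u + 1 := by
    have := hG.isConnected.dist_triangle (u := r) (v := u) (w := v)
    rwa [SimpleGraph.dist_eq_one_iff_adj.2 h] at this
  have hle2 : G.dist r u ≤ G.dist r v + 1 := by
    have := hG.isConnected.dist_triangle (u := r) (v := v) (w := u)
    rwa [SimpleGraph.dist_eq_one_iff_adj.2 h.symm] at this
  have hne : G.dist r u ≠ G.dist r v := by
    intro heq
    obtain ⟨p, hp, hpl⟩ := hG.isConnected.exists_path_of_dist r u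
    obtain ⟨q, hq, hql⟩ := hG.isConnected.exists_path_of_dist r v
    have hvns : v ∉ p.support := by
      intro hv
      have h1 : G.dist r v ≤ (p.takeUntil v hv).length := SimpleGraph.dist_le _
      have h2 : (p.takeUntil v hv).length + (p.dropUntil v hv).length = p.length := by
        rw [← SimpleGraph.Walk.length_append, SimpleGraph.Walk.take_spec]
      have h3 : (p.dropUntil v hv).length = 0 := by omega
      have := SimpleGraph.Walk.eq_of_length_eq_zero h3
      exact h.ne this.symm
    have hvnps : v ∉ p.reverse.support := by
      rwa [SimpleGraph.Walk.support_reverse, List.mem_reverse]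
    have hW : (SimpleGraph.Walk.cons h.symm p.reverse).IsPath := hp.reverse.cons hvnps
    have hQ : q.reverse.IsPath := hq.reverse
    have := hG.IsAcyclic.path_unique ⟨_, hW⟩ ⟨_, hQ⟩
    rw [Subtype.mk_eq_mk] at this
    have hlen := congrArg SimpleGraph.Walk.length this
    simp only [SimpleGraph.Walk.length_cons, SimpleGraph.Walk.length_reverse] at hlen
    omega
  omega

lemma parent_existsX {v : V} (hv : v ≠ r) :
    ∃ u, G.Adj v u ∧ G.dist r u + 1 = G.dist r v := by
  have hd : G.dist r v ≠ 0 := by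
    intro h0
    rcases SimpleGraph.dist_eq_zero_iff_eq_or_not_reachable.mp h0 with h' | h'
    exacts [hv h'.symm, h' (hG.isConnected r v)]
  obtain ⟨p, hp, hpl⟩ := hG.isConnected.exists_path_of_dist r v
  obtain ⟨u, hadj, q, hq⟩ := SimpleGraph.Walk.exists_eq_cons_of_ne hv p.reverse
  refine ⟨u, hadj, ?_⟩
  have h1 : G.dist r u ≤ q.length := by
    have := SimpleGraph.dist_le q.reverse
    rwa [SimpleGraph.Walk.length_reverse] at this
  have h2 : q.length + 1 = G.dist r v := by
    have : p.reverse.length = q.length + 1 := by rw [hq]; simp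
    rw [SimpleGraph.Walk.length_reverse] at this; omega
  have h3 : G.dist r v ≤ G.dist r u + 1 := by
    have := hG.isConnected.dist_triangle (u := r) (v := u) (w := v)
    rwa [SimpleGraph.dist_eq_one_iff_adj.2 hadj.symm] at this
  omega

lemma parent_uniqueX {v u₁ u₂ : V} (h1 : G.Adj v u₁) (e1 : G.dist r u₁ + 1 = G.dist r v)
    (h2 : G.Adj v u₂) (e2 : G.dist r u₂ + 1 = G.dist r v) : u₁ = u₂ := by
  obtain ⟨p₁, hp₁, hl₁⟩ := hG.isConnected.exists_path_of_dist u₁ r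
  obtain ⟨p₂, hp₂, hl₂⟩ := hG.isConnected.exists_path_of_dist u₂ r
  have hvn : ∀ (u : V) (p : G.Walk u r), p.IsPath → p.length = G.dist u r →
      G.dist r u + 1 = G.dist r v → v ∉ p.support := by
    intro u p hp hl he hv
    have h1' : G.dist v r ≤ (p.dropUntil v hv).length := SimpleGraph.dist_le _
    have h2' : (p.dropUntil v hv).length ≤ p.length := SimpleGraph.Walk.length_dropUntil_le _ hv
    rw [hl, SimpleGraph.dist_comm] at h2'
    rw [SimpleGraph.dist_comm] at h1'
    omega
  have hW₁ : (SimpleGraph.Walk.cons h1 p₁).IsPath :=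
    hp₁.cons (hvn u₁ p₁ hp₁ hl₁ e1)
  have hW₂ : (SimpleGraph.Walk.cons h2 p₂).IsPath :=
    hp₂.cons (hvn u₂ p₂ hp₂ hl₂ e2)
  have := hG.IsAcyclic.path_unique ⟨_, hW₁⟩ ⟨_, hW₂⟩
  rw [Subtype.mk_eq_mk] at this
  have h5 := congrArg (fun w => SimpleGraph.Walk.getVert w 1) this
  simpa [SimpleGraph.Walk.getVert_cons_succ] using h5

lemma adj_of_children {u v : V} (h : u ∈ children G r v) : G.Adj v u := (mem_children.1 h).1

lemma desc_self (u : V) : Desc G r u u := by simp [Desc, SimpleGraph.dist_self]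

lemma desc_depth {u w : V} (h : Desc G r u w) : G.dist r u ≤ G.dist r w := by
  rw [Desc] at h; omega

lemma desc_trans {u x w : V} (h1 : Desc G r u x) (h2 : Desc G r x w) : Desc G r u w := by
  rw [Desc] at *
  have t1 : G.dist r w ≤ G.dist r u + G.dist u w := hG.isConnected.dist_triangle
  have t2 : G.dist u w ≤ G.dist u x + G.dist x w := hG.isConnected.dist_triangle
  omega

lemma desc_child {u v : V} (h : u ∈ children G r v) : Desc G r v u := by
  obtain ⟨hadj, hd⟩ := mem_children.1 h
  rw [Desc, SimpleGraph.dist_eq_one_iff_adj.2 hadj, hd]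

lemma desc_step {c w : V} (hdesc : Desc G r c w) (hne : w ≠ c) :
    ∃ x, G.Adj w x ∧ G.dist c x + 1 = G.dist c w ∧ Desc G r c x ∧
      G.dist r x + 1 = G.dist r w := by
  have hd0 : G.dist c w ≠ 0 := by
    intro h0
    rcases SimpleGraph.dist_eq_zero_iff_eq_or_not_reachable.mp h0 with h' | h'
    exacts [hne h'.symm, h' (hG.isConnected c w)]
  obtain ⟨p, hp, hpl⟩ := hG.isConnected.exists_path_of_dist c w
  obtain ⟨x, hadj, q, hq⟩ := SimpleGraph.Walk.exists_eq_cons_of_ne hne p.reverse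
  have hql : q.length + 1 = G.dist c w := by
    have : p.reverse.length = q.length + 1 := by rw [hq]; simp
    rw [SimpleGraph.Walk.length_reverse] at this; omega
  have h1 : G.dist c x ≤ q.length := by
    have := SimpleGraph.dist_le q.reverse
    rwa [SimpleGraph.Walk.length_reverse] at this
  have h2 : G.dist c w ≤ G.dist c x + 1 := by
    have := hG.isConnected.dist_triangle (u := c) (v := x) (w := w)
    rwa [SimpleGraph.dist_eq_one_iff_adj.2 hadj.symm] at this
  have hcx : G.dist c x + 1 = G.dist c w := by omega
  have htx : G.dist r x ≤ G.dist r c + G.dist c x := hG.isConnected.dist_triangle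
  rw [Desc] at hdesc
  have hxd : G.dist r x + 1 = G.dist r w := by
    rcases adj_distX hG r hadj with h' | h'
    · omega
    · omega
  exact ⟨x, hadj, hcx, by rw [Desc]; omega, hxd⟩

lemma desc_disjoint_aux : ∀ (n : ℕ) {v c₁ c₂ w : V}, c₁ ∈ children G r v →
    c₂ ∈ children G r v → c₁ ≠ c₂ → Desc G r c₁ w → Desc G r c₂ w →
    G.dist c₁ w ≤ n → False := by
  intro n
  induction n with
  | zero =>
    intro v c₁ c₂ w h1 h2 hne hd1 hd2 hn
    have : G.dist c₁ w = 0 := by omega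
    rcases SimpleGraph.dist_eq_zero_iff_eq_or_not_reachable.mp this with h' | h'
    · subst h'
      rw [Desc] at hd2
      have e1 := (mem_children.1 h1).2
      have e2 := (mem_children.1 h2).2
      have : G.dist c₂ c₁ = 0 := by omega
      rcases SimpleGraph.dist_eq_zero_iff_eq_or_not_reachable.mp this with h'' | h''
      · exact hne h''.symm
      · exact h'' (hG.isConnected c₂ c₁)
    · exact h' (hG.isConnected c₁ w)
  | succ n ih =>
    intro v c₁ c₂ w h1 h2 hne hd1 hd2 hn
    by_cases hw1 : w = c₁
    · subst hw1
      rw [Desc] at hd2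
      have e1 := (mem_children.1 h1).2
      have e2 := (mem_children.1 h2).2
      have : G.dist c₂ w = 0 := by omega
      rcases SimpleGraph.dist_eq_zero_iff_eq_or_not_reachable.mp this with h'' | h''
      · exact hne h''.symm
      · exact h'' (hG.isConnected c₂ w)
    · by_cases hw2 : w = c₂
      · subst hw2
        rw [Desc] at hd1
        have e1 := (mem_children.1 h1).2
        have e2 := (mem_children.1 h2).2
        have : G.dist c₁ w = 0 := by omega
        rcases SimpleGraph.dist_eq_zero_iff_eq_or_not_reachable.mp this with h'' | h''
        · exact hne h''
        · exact h'' (hG.isConnected c₁ w)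
      · obtain ⟨x₁, ha1, he1, hdx1, hp1⟩ := desc_step hG r hd1 hw1
        obtain ⟨x₂, ha2, he2, hdx2, hp2⟩ := desc_step hG r hd2 hw2
        have hxx : x₁ = x₂ := parent_uniqueX hG r ha1 hp1 ha2 hp2
        subst hxx
        exact ih h1 h2 hne hdx1 hdx2 (by omega)

lemma desc_disjoint {v c₁ c₂ w : V} (h1 : c₁ ∈ children G r v) (h2 : c₂ ∈ children G r v)
    (hne : c₁ ≠ c₂) (hd1 : Desc G r c₁ w) (hd2 : Desc G r c₂ w) : False :=
  desc_disjoint_aux hG r (G.dist c₁ w) h1 h2 hne hd1 hd2 le_rfl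

end

noncomputable def psi {V : Type*} [Fintype V] {G : SimpleGraph V} (hG : G.IsTree) (r : V) :
    V → ℕ := fun v =>
  if h : (children G r v).Nonempty then
    have hne : (children G r v).attach.Nonempty := Finset.attach_nonempty_iff.2 h
    (1 + ∑ u ∈ (children G r v).attach, psi hG r u.1) -
      (children G r v).attach.inf' hne (fun u => psi hG r u.1)
  else 0
termination_by v => Fintype.card V - G.dist r v
decreasing_by
  all_goals
    have hm := (mem_children.1 u.2).2
    have hlt := dist_lt_cardX hG r u.1
    omega

section
variable (hG : G.IsTree) (r : V)
include hG

lemma psi_leaf {v : V} (h : ¬ (children G r v).Nonempty) : psi hG r v = 0 := by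
  rw [psi, dif_neg h]

lemma psi_spec {v : V} (h : (children G r v).Nonempty) :
    psi hG r v + (children G r v).inf' h (psi hG r) =
      1 + ∑ u ∈ children G r v, psi hG r u := by
  have hne : (children G r v).attach.Nonempty := Finset.attach_nonempty_iff.2 h
  have hsum : ∑ u ∈ (children G r v).attach, psi hG r u.1 =
      ∑ u ∈ children G r v, psi hG r u := Finset.sum_attach _ _
  have hinf : (children G r v).attach.inf' hne (fun u => psi hG r u.1) =
      (children G r v).inf' h (psi hG r) := by
    apply le_antisymm
    · obtain ⟨i, hi, hei⟩ := Finset.exists_mem_eq_inf' h (psi hG r)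
      rw [hei]
      exact Finset.inf'_le _ (Finset.mem_attach _ ⟨i, hi⟩)
    · obtain ⟨i, hi, hei⟩ := Finset.exists_mem_eq_inf' hne (fun u => psi hG r u.1)
      rw [hei]
      exact Finset.inf'_le _ i.2
  have hle : (children G r v).inf' h (psi hG r) ≤ ∑ u ∈ children G r v, psi hG r u := by
    obtain ⟨i, hi, hei⟩ := Finset.exists_mem_eq_inf' h (psi hG r)
    rw [hei]
    exact Finset.single_le_sum (fun j _ => Nat.zero_le _) hi
  rw [psi, dif_pos h]
  simp only [hsum, hinf]
  omega

lemma induce_connected {v : V} (C : Finset V) (hC : ∀ c ∈ C, G.Adj v c) (Y : V → Finset V)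
    (hY : ∀ c ∈ C, Y c = ∅ ∨ (c ∈ Y c ∧ (G.induce ((Y c : Finset V) : Set V)).Connected)) :
    (G.induce ((insert v (C.biUnion Y) : Finset V) : Set V)).Connected := by
  set X : Finset V := insert v (C.biUnion Y) with hX
  have hvX : v ∈ X := Finset.mem_insert_self _ _
  haveI : Nonempty ((X : Finset V) : Set V) := ⟨⟨v, hvX⟩⟩
  constructor
  · suffices H : ∀ a : ((X : Finset V) : Set V), (G.induce _).Reachable a ⟨v, hvX⟩ by
      intro a b
      exact (H a).trans (H b).symm
    rintro ⟨x, hx⟩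
    have hx' : x = v ∨ ∃ c ∈ C, x ∈ Y c := by
      simpa [hX, Finset.mem_insert, Finset.mem_biUnion] using hx
    rcases hx' with rfl | ⟨c, hcC, hcY⟩
    · rfl
    · obtain ⟨hcmem, hconn⟩ := (hY c hcC).resolve_left (Finset.ne_empty_of_mem hcY)
      have hsub : ((Y c : Finset V) : Set V) ⊆ ((X : Finset V) : Set V) := by
        intro a ha
        rw [Finset.mem_coe] at *
        exact Finset.mem_insert_of_mem (Finset.mem_biUnion.2 ⟨c, hcC, ha⟩)
      have h1 : (G.induce ((Y c : Finset V) : Set V)).Reachable ⟨x, hcY⟩ ⟨c, hcmem⟩ :=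
        hconn.preconnected _ _
      have h2 := h1.map (G.induceHomOfLE hsub).toHom
      have h3 : (G.induce ((X : Finset V) : Set V)).Adj ⟨c, hsub hcmem⟩ ⟨v, hvX⟩ :=
        (hC c hcC).symm
      exact h2.trans h3.reachable

lemma coreAt : ∀ (n : ℕ) (v : V), Fintype.card V - G.dist r v ≤ n →
    ∃ Y : Finset V, (∀ x ∈ Y, Desc G r v x) ∧
      (Y = ∅ ∨ (v ∈ Y ∧ (G.induce ((Y : Finset V) : Set V)).Connected)) ∧
      (∀ x ∈ Y, ∃ y, G.Adj x y ∧ y ∉ Y ∧ Desc G r v y) ∧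
      psi hG r v ≤ Y.card := by
  intro n
  induction n with
  | zero =>
    intro v hv
    have := dist_lt_cardX hG r v
    omega
  | succ n ih =>
    intro v hv
    by_cases h : (children G r v).Nonempty
    · -- pick the minimal child
      obtain ⟨cm, hcm, hcmin⟩ := Finset.exists_mem_eq_inf' h (psi hG r)
      -- recursive cores for other children
      have hrec : ∀ u ∈ children G r v, ∃ Y : Finset V, (∀ x ∈ Y, Desc G r u x) ∧
          (Y = ∅ ∨ (u ∈ Y ∧ (G.induce ((Y : Finset V) : Set V)).Connected)) ∧
          (∀ x ∈ Y, ∃ y, G.Adj x y ∧ y ∉ Y ∧ Desc G r u y) ∧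
          psi hG r u ≤ Y.card := by
        intro u hu
        have := (mem_children.1 hu).2
        exact ih u (by omega)
      choose! Yf hdesc hconn hwit hcard using hrec
      set C : Finset V := (children G r v).erase cm with hC
      refine ⟨insert v (C.biUnion Yf), ?_, ?_, ?_, ?_⟩
      · intro x hx
        rcases Finset.mem_insert.1 hx with rfl | hx'
        · exact desc_self hG r x
        · obtain ⟨u, huC, hxY⟩ := Finset.mem_biUnion.1 hx'
          have huc : u ∈ children G r v := Finset.mem_of_mem_erase huC
          exact desc_trans hG r (desc_child hG r huc) (hdesc u huc x hxY)
      · right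
        refine ⟨Finset.mem_insert_self _ _, ?_⟩
        exact induce_connected hG C
          (fun c hc => adj_of_children hG r (Finset.mem_of_mem_erase hc)) Yf
          (fun c hc => hconn c (Finset.mem_of_mem_erase hc))
      · intro x hx
        rcases Finset.mem_insert.1 hx with rfl | hx'
        · -- witness for v : the erased minimal child cm
          refine ⟨cm, adj_of_children hG r hcm, ?_, desc_child hG r hcm⟩
          intro hmem
          rcases Finset.mem_insert.1 hmem with h' | h'
          · -- cm = v impossible by depth
            have := (mem_children.1 hcm).2
            rw [h'] at this; omega
          · obtain ⟨u, huC, hY⟩ := Finset.mem_biUnion.1 h'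
            have huc := Finset.mem_of_mem_erase huC
            have hne : u ≠ cm := Finset.ne_of_mem_erase huC
            exact desc_disjoint hG r huc hcm hne (hdesc u huc cm hY) (desc_self hG r cm)
        · obtain ⟨u, huC, hxY⟩ := Finset.mem_biUnion.1 hx'
          have huc : u ∈ children G r v := Finset.mem_of_mem_erase huC
          obtain ⟨y, hay, hyn, hydesc⟩ := hwit u huc x hxY
          refine ⟨y, hay, ?_, desc_trans hG r (desc_child hG r huc) hydesc⟩
          intro hmem
          rcases Finset.mem_insert.1 hmem with h' | h'
          · -- y = v impossible by depth
            have h1 := desc_depth hG r hydesc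
            have h2 := (mem_children.1 huc).2
            rw [h'] at h1; omega
          · obtain ⟨u', huC', hY'⟩ := Finset.mem_biUnion.1 h'
            have huc' : u' ∈ children G r v := Finset.mem_of_mem_erase huC'
            by_cases heq : u' = u
            · subst heq; exact hyn hY'
            · exact desc_disjoint hG r huc' huc heq (hdesc u' huc' y hY') hydesc
      · -- cardinality
        have hvnot : v ∉ C.biUnion Yf := by
          intro hmem
          obtain ⟨u, huC, hY⟩ := Finset.mem_biUnion.1 hmem
          have huc : u ∈ children G r v := Finset.mem_of_mem_erase huC
          have h1 := desc_depth hG r (hdesc u huc v hY)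
          have h2 := (mem_children.1 huc).2
          omega
        rw [Finset.card_insert_of_notMem hvnot]
        have hdisj : ∀ u₁ ∈ C, ∀ u₂ ∈ C, u₁ ≠ u₂ → Disjoint (Yf u₁) (Yf u₂) := by
          intro u₁ h₁ h₂arg h₂ hne
          rw [Finset.disjoint_left]
          intro a ha1 ha2
          exact desc_disjoint hG r (Finset.mem_of_mem_erase h₁)
            (Finset.mem_of_mem_erase h₂) hne
            (hdesc _ (Finset.mem_of_mem_erase h₁) a ha1)
            (hdesc _ (Finset.mem_of_mem_erase h₂) a ha2)
        rw [Finset.card_biUnion hdisj]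
        have hsum : ∑ u ∈ C, psi hG r u ≤ ∑ u ∈ C, (Yf u).card :=
          Finset.sum_le_sum (fun u hu => hcard u (Finset.mem_of_mem_erase hu))
        have hsplit := Finset.sum_erase_add (children G r v) (psi hG r) hcm
        have hspec := psi_spec hG r h
        rw [hcmin] at hspec
        rw [hC] at hsum ⊢
        omega
    · exact ⟨∅, by simp, Or.inl rfl, by simp, by simp [psi_leaf hG r h]⟩

lemma sum_children_psi_le {c : ℕ} (hc2 : ∀ X : Finset V, IsTreeCore G X → X.card ≤ c)
    {v : V} (hv : v ≠ r) : ∑ u ∈ children G r v, psi hG r u + 1 ≤ c := by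
  obtain ⟨p, hpadj, hpd⟩ := parent_existsX hG r hv
  have hrec : ∀ u ∈ children G r v, ∃ Y : Finset V, (∀ x ∈ Y, Desc G r u x) ∧
      (Y = ∅ ∨ (u ∈ Y ∧ (G.induce ((Y : Finset V) : Set V)).Connected)) ∧
      (∀ x ∈ Y, ∃ y, G.Adj x y ∧ y ∉ Y ∧ Desc G r u y) ∧
      psi hG r u ≤ Y.card := fun u _ => coreAt hG r (Fintype.card V) u (by omega)
  choose! Yf hdesc hconn hwit hcard using hrec
  set C : Finset V := children G r v with hC
  set X : Finset V := insert v (C.biUnion Yf) with hXdef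
  have hvnot : v ∉ C.biUnion Yf := by
    intro hmem
    obtain ⟨u, huC, hY⟩ := Finset.mem_biUnion.1 hmem
    have h1 := desc_depth hG r (hdesc u huC v hY)
    have h2 := (mem_children.1 huC).2
    omega
  have hcore : IsTreeCore G X := by
    constructor
    · exact induce_connected hG C (fun u hu => adj_of_children hG r hu) Yf hconn
    · intro x hx
      rcases Finset.mem_insert.1 hx with h' | hx'
      · refine ⟨p, ?_, by rw [h']; exact hpadj⟩
        intro hmem
        rcases Finset.mem_insert.1 hmem with h'' | h''
        · rw [h''] at hpd; omega
        · obtain ⟨u, huC, hY⟩ := Finset.mem_biUnion.1 h''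
          have h1 := desc_depth hG r (hdesc u huC p hY)
          have h2 := (mem_children.1 huC).2
          omega
      · obtain ⟨u, huC, hxY⟩ := Finset.mem_biUnion.1 hx'
        obtain ⟨y, hay, hyn, hydesc⟩ := hwit u huC x hxY
        refine ⟨y, ?_, hay⟩
        intro hmem
        rcases Finset.mem_insert.1 hmem with h' | h'
        · have h1 := desc_depth hG r hydesc
          have h2 := (mem_children.1 huC).2
          rw [h'] at h1; omega
        · obtain ⟨u', huC', hY'⟩ := Finset.mem_biUnion.1 h'
          by_cases heq : u' = u
          · subst heq; exact hyn hY'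
          · exact desc_disjoint hG r huC' huC heq (hdesc u' huC' y hY') hydesc
  have hcX := hc2 X hcore
  have hdisj : ∀ u₁ ∈ C, ∀ u₂ ∈ C, u₁ ≠ u₂ → Disjoint (Yf u₁) (Yf u₂) := by
    intro u₁ h₁ u₂ h₂ hne
    rw [Finset.disjoint_left]
    intro a ha1 ha2
    exact desc_disjoint hG r h₁ h₂ hne (hdesc _ h₁ a ha1) (hdesc _ h₂ a ha2)
  have hcards : X.card = 1 + ∑ u ∈ C, (Yf u).card := by
    rw [hXdef, Finset.card_insert_of_notMem hvnot, Finset.card_biUnion hdisj]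
    omega
  have hsum : ∑ u ∈ C, psi hG r u ≤ ∑ u ∈ C, (Yf u).card :=
    Finset.sum_le_sum (fun u hu => hcard u hu)
  rw [hC] at hsum hcards ⊢
  omega

lemma psi_root_le {c : ℕ} (hc2 : ∀ X : Finset V, IsTreeCore G X → X.card ≤ c) :
    psi hG r r ≤ c := by
  obtain ⟨Y, hdesc, hconn, hwit, hcard⟩ := coreAt hG r (Fintype.card V) r (by omega)
  rcases hconn with h' | ⟨hrY, hconn⟩
  · rw [h'] at hcard; simpa using hcard.trans (Nat.zero_le c)
  · have hcore : IsTreeCore G Y := by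
      refine ⟨hconn, fun x hx => ?_⟩
      obtain ⟨y, hay, hyn, _⟩ := hwit x hx
      exact ⟨y, hyn, hay⟩
    exact hcard.trans (hc2 Y hcore)

end

section Analytic

variable (hG : G.IsTree) (r : V) (c : ℕ)

noncomputable def Ff (v u : V) : ℝ :=
  if G.dist r u = G.dist r v + 1 then 1 - (psi hG r u : ℝ) / c else (psi hG r v : ℝ) / c

noncomputable def keyf (v u : V) : ℝ ×ₗ ℕ := toLex (Ff hG r c v u, (Fintype.equivFin V u : ℕ))

noncomputable def prevSet (v u : V) : Finset V :=
  (G.neighborFinset v).filter (fun w => keyf hG r c v w < keyf hG r c v u)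

noncomputable def Pf (v u : V) : ℝ :=
  if h : (prevSet hG r c v u).Nonempty then (prevSet hG r c v u).sup' h (Ff hG r c v) else 0

noncomputable def Wf (v u : V) : ℝ := Ff hG r c v u - Pf hG r c v u

noncomputable def Lset (v u : V) : Finset V :=
  (G.neighborFinset v).filter (fun w => keyf hG r c v u ≤ keyf hG r c v w)

variable {hG r c}

lemma keyf_inj {v a b : V} (h : keyf hG r c v a = keyf hG r c v b) : a = b := by
  have h2 := congrArg (fun x => (ofLex x).2) h
  simp only [keyf, ofLex_toLex] at h2
  exact (Fintype.equivFin V).injective (Fin.ext h2)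

lemma keyf_mono {v a b : V} (h : keyf hG r c v a ≤ keyf hG r c v b) :
    Ff hG r c v a ≤ Ff hG r c v b := by
  rcases Prod.Lex.le_iff.1 h with h' | h'
  · exact le_of_lt h'
  · exact le_of_eq h'.1

variable (hc1 : 1 ≤ c) (hc2 : ∀ X : Finset V, IsTreeCore G X → X.card ≤ c)
include hG hc1 hc2

lemma psi_le_c {u : V} (hu : u ≠ r) : psi hG r u ≤ c := by
  by_cases h : (children G r u).Nonempty
  · have hs := psi_spec hG r h
    have hk := sum_children_psi_le hG r hc2 hu
    omega
  · rw [psi_leaf hG r h]; omega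

lemma Ff_nonneg {v u : V} (h : G.Adj v u) : 0 ≤ Ff hG r c v u := by
  have hc0 : (0:ℝ) < c := by exact_mod_cast hc1
  rw [Ff]
  split_ifs with hd
  · have hur : u ≠ r := by
      intro h'; rw [h'] at hd; simp [SimpleGraph.dist_self] at hd
    have := psi_le_c (hG := hG) hc1 hc2 hur
    have : (psi hG r u : ℝ) ≤ c := by exact_mod_cast this
    have := div_le_one_of_le₀ this (le_of_lt hc0)
    linarith
  · positivity

lemma Wf_nonneg {v u : V} (h : u ∈ G.neighborFinset v) : 0 ≤ Wf hG r c v u := by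
  rw [Wf, Pf]
  split_ifs with hne
  · rw [sub_nonneg]
    apply Finset.sup'_le
    intro w hw
    have hw' := (Finset.mem_filter.1 hw).2
    exact keyf_mono (le_of_lt hw')
  · rw [sub_zero]
    exact Ff_nonneg hc1 hc2 ((SimpleGraph.mem_neighborFinset _ _ _).1 h)

lemma telescope_base (v y : V) (hy : y ∈ G.neighborFinset v)
    (hemp : prevSet hG r c v y = ∅) :
    ∑ u ∈ (G.neighborFinset v).filter (fun u => keyf hG r c v u ≤ keyf hG r c v y),
      Wf hG r c v u = Ff hG r c v y := by
    have hfil : (G.neighborFinset v).filter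
        (fun u => keyf hG r c v u ≤ keyf hG r c v y) = {y} := by
      ext u
      simp only [Finset.mem_filter, Finset.mem_singleton]
      constructor
      · rintro ⟨hu, hle⟩
        rcases lt_or_eq_of_le hle with hlt | heq
        · exfalso
          have : u ∈ prevSet hG r c v y := Finset.mem_filter.2 ⟨hu, hlt⟩
          rw [hemp] at this; exact absurd this (Finset.notMem_empty u)
        · exact keyf_inj heq
      · rintro rfl; exact ⟨hy, le_rfl⟩
    rw [hfil, Finset.sum_singleton, Wf, Pf, dif_neg (by rw [hemp]; simp), sub_zero]

lemma telescope : ∀ (m : ℕ) (v y : V), y ∈ G.neighborFinset v →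
    (prevSet hG r c v y).card ≤ m →
    ∑ u ∈ (G.neighborFinset v).filter (fun u => keyf hG r c v u ≤ keyf hG r c v y),
      Wf hG r c v u = Ff hG r c v y := by
  intro m
  induction m with
  | zero =>
    intro v y hy hcard
    exact telescope_base hc1 hc2 v y hy (Finset.card_eq_zero.1 (Nat.le_zero.1 hcard))
  | succ m ih =>
    intro v y hy hcard
    by_cases hne : (prevSet hG r c v y).Nonempty
    · obtain ⟨z, hz, hzmax⟩ := Finset.exists_max_image _ (keyf hG r c v) hne
      have hzmem := Finset.mem_filter.1 hz
      have hzy : keyf hG r c v z < keyf hG r c v y := hzmem.2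
      have hprev_eq : prevSet hG r c v y = (G.neighborFinset v).filter
          (fun u => keyf hG r c v u ≤ keyf hG r c v z) := by
        ext u
        simp only [prevSet, Finset.mem_filter]
        constructor
        · rintro ⟨hu, _⟩
          exact ⟨hu, hzmax u (Finset.mem_filter.2 ⟨hu, ‹_›⟩)⟩
        · rintro ⟨hu, hle⟩
          exact ⟨hu, lt_of_le_of_lt hle hzy⟩
      have hsz : (prevSet hG r c v z).card ≤ m := by
        have hss : prevSet hG r c v z ⊂ prevSet hG r c v y := by
          rw [Finset.ssubset_iff_of_subset]
          · exact ⟨z, hz, by simp [prevSet]⟩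
          · intro u hu
            obtain ⟨hu1, hu2⟩ := Finset.mem_filter.1 hu
            exact Finset.mem_filter.2 ⟨hu1, lt_trans hu2 hzy⟩
        have := Finset.card_lt_card hss
        omega
      have hIH := ih v z hzmem.1 hsz
      have hfil : (G.neighborFinset v).filter
          (fun u => keyf hG r c v u ≤ keyf hG r c v y) =
          insert y (prevSet hG r c v y) := by
        ext u
        simp only [Finset.mem_filter, Finset.mem_insert, prevSet]
        constructor
        · rintro ⟨hu, hle⟩
          rcases lt_or_eq_of_le hle with hlt | heq
          · exact Or.inr ⟨hu, hlt⟩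
          · exact Or.inl (keyf_inj heq)
        · rintro (rfl | ⟨h1, h2⟩)
          · exact ⟨hy, le_rfl⟩
          · exact ⟨h1, le_of_lt h2⟩
      have hynotprev : y ∉ prevSet hG r c v y := by
        simp [prevSet]
      have hPy : Pf hG r c v y = Ff hG r c v z := by
        rw [Pf, dif_pos hne]
        apply le_antisymm
        · apply Finset.sup'_le
          intro w hw
          exact keyf_mono (hzmax w hw)
        · exact Finset.le_sup' _ hz
      rw [hfil, Finset.sum_insert hynotprev, hprev_eq, hIH, Wf, hPy]
      ring
    · exact telescope_base hc1 hc2 v y hy (Finset.not_nonempty_iff_eq_empty.1 hne)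

lemma cover_one {x y : V} (h : G.Adj x y) :
    Ff hG r c x y + Ff hG r c y x = 1 := by
  rcases adj_distX hG r h with h' | h'
  · rw [Ff, Ff, if_pos h', if_neg (by omega)]
    ring
  · rw [Ff, Ff, if_neg (by omega), if_pos h']
    ring

lemma children_root : G.neighborFinset r = children G r r := by
  ext u
  rw [mem_children, SimpleGraph.mem_neighborFinset]
  constructor
  · intro h
    refine ⟨h, ?_⟩
    rcases adj_distX hG r h with h' | h'
    · exact h'
    · rw [SimpleGraph.dist_self] at h' ⊢
      omega
  · exact fun h => h.1

lemma nonroot_split {v : V} (hv : v ≠ r) : ∃ p, G.Adj v p ∧ G.dist r p + 1 = G.dist r v ∧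
    p ∉ children G r v ∧ G.neighborFinset v = insert p (children G r v) := by
  obtain ⟨p, hpadj, hpd⟩ := parent_existsX hG r hv
  refine ⟨p, hpadj, hpd, ?_, ?_⟩
  · rw [mem_children]
    rintro ⟨-, h⟩
    omega
  · ext u
    rw [SimpleGraph.mem_neighborFinset, Finset.mem_insert, mem_children]
    constructor
    · intro h
      rcases adj_distX hG r h with h' | h'
      · exact Or.inr ⟨h, h'⟩
      · exact Or.inl (parent_uniqueX hG r h (by omega) hpadj hpd)
    · rintro (rfl | ⟨h, -⟩)
      exacts [hpadj, h]

lemma Ff_child {v u : V} (hd : G.dist r u = G.dist r v + 1) :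
    Ff hG r c v u = 1 - (psi hG r u : ℝ) / c := if_pos hd

lemma Ff_par {v u : V} (hd : G.dist r u = G.dist r v + 1) :
    Ff hG r c u v = (psi hG r u : ℝ) / c := if_neg (by omega)

lemma sum_Ff_children {x : V} :
    ∑ v ∈ children G r x, Ff hG r c v x =
      ((∑ v ∈ children G r x, psi hG r v : ℕ) : ℝ) / c := by
  rw [Finset.sum_congr rfl (fun v hv => Ff_par (hG := hG) hc1 hc2 (mem_children.1 hv).2),
    ← Finset.sum_div, Nat.cast_sum]

lemma load_bound {x y : V} (hy : y ∈ G.neighborFinset x) :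
    Ff hG r c x y + ∑ v ∈ G.neighborFinset x, Ff hG r c v x ≤ 2 - 1 / (c : ℝ) := by
  have hc0 : (0:ℝ) < c := by exact_mod_cast hc1
  have hcc : (c:ℝ) / c = 1 := div_self (ne_of_gt hc0)
  by_cases hx : x = r
  · rcases hx.symm with rfl
    rw [children_root (hG := hG) hc1 hc2] at hy ⊢
    rw [sum_Ff_children hc1 hc2]
    have hyd := (mem_children.1 hy).2
    rw [Ff_child (hG := hG) hc1 hc2 hyd]
    have hne : (children G r r).Nonempty := ⟨y, hy⟩
    have hspec := psi_spec hG r hne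
    have hinf : (children G r r).inf' hne (psi hG r) ≤ psi hG r y := Finset.inf'_le _ hy
    have hK2 := psi_root_le hG r hc2
    have hnat : (∑ v ∈ children G r r, psi hG r v) + 1 ≤ c + psi hG r y := by omega
    have hcast : ((∑ v ∈ children G r r, psi hG r v : ℕ) : ℝ) + 1 ≤
        (c : ℝ) + (psi hG r y : ℝ) := by exact_mod_cast hnat
    have hdiv : (((∑ v ∈ children G r r, psi hG r v : ℕ) : ℝ) + 1) / c ≤
        ((c : ℝ) + (psi hG r y : ℝ)) / c := div_le_div_of_nonneg_right hcast hc0.le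
    rw [add_div, add_div, hcc] at hdiv
    linarith
  · obtain ⟨p, hpadj, hpd, hpnot, hsplit⟩ := nonroot_split (hG := hG) hc1 hc2 hx
    rw [hsplit] at hy ⊢
    rw [Finset.sum_insert hpnot, sum_Ff_children hc1 hc2,
      Ff_child (hG := hG) hc1 hc2 (show G.dist r x = G.dist r p + 1 by omega)]
    have hK1 := sum_children_psi_le hG r hc2 hx
    rcases Finset.mem_insert.1 hy with rfl | hych
    · rw [Ff_par (hG := hG) hc1 hc2 (show G.dist r x = G.dist r y + 1 by omega)]
      have hcast : ((∑ v ∈ children G r x, psi hG r v : ℕ) : ℝ) + 1 ≤ (c : ℝ) := by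
        exact_mod_cast hK1
      have hdiv : (((∑ v ∈ children G r x, psi hG r v : ℕ) : ℝ) + 1) / c ≤ (c : ℝ) / c :=
        div_le_div_of_nonneg_right hcast hc0.le
      rw [add_div, hcc] at hdiv
      linarith
    · have hyd := (mem_children.1 hych).2
      rw [Ff_child (hG := hG) hc1 hc2 hyd]
      have hne : (children G r x).Nonempty := ⟨y, hych⟩
      have hspec := psi_spec hG r hne
      have hinf : (children G r x).inf' hne (psi hG r) ≤ psi hG r y := Finset.inf'_le _ hych
      have hnat : (∑ v ∈ children G r x, psi hG r v) + 1 ≤ psi hG r x + psi hG r y := by omega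
      have hcast : ((∑ v ∈ children G r x, psi hG r v : ℕ) : ℝ) + 1 ≤
          (psi hG r x : ℝ) + (psi hG r y : ℝ) := by exact_mod_cast hnat
      have hdiv : (((∑ v ∈ children G r x, psi hG r v : ℕ) : ℝ) + 1) / c ≤
          ((psi hG r x : ℝ) + (psi hG r y : ℝ)) / c := div_le_div_of_nonneg_right hcast hc0.le
      rw [add_div, add_div] at hdiv
      linarith


variable (hG r c) in
noncomputable def stf (S0 : GraphStar G) (p : V × V) : GraphStar G :=
  if h : p.2 ∈ G.neighborFinset p.1 then
    ⟨p.1, Lset hG r c p.1 p.2, ⟨p.2, Finset.mem_filter.2 ⟨h, le_rfl⟩⟩,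
      fun u hu => (SimpleGraph.mem_neighborFinset _ _ _).1 (Finset.mem_filter.1 hu).1⟩
  else S0

omit hc1 hc2 in
lemma stf_memE {S0 : GraphStar G} {p : V × V} (h : p.2 ∈ G.neighborFinset p.1) {x y : V} :
    (stf hG r c S0 p).memE x y ↔
      (x = p.1 ∧ y ∈ Lset hG r c p.1 p.2) ∨ (y = p.1 ∧ x ∈ Lset hG r c p.1 p.2) := by
  rw [stf, dif_pos h, GraphStar.memE]

omit hc1 hc2 in
lemma stf_memV {S0 : GraphStar G} {p : V × V} (h : p.2 ∈ G.neighborFinset p.1) {x : V} :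
    (stf hG r c S0 p).memV x ↔ x = p.1 ∨ x ∈ Lset hG r c p.1 p.2 := by
  rw [stf, dif_pos h, GraphStar.memV]

lemma sum_W_nbr (v ym : V) (hym : ym ∈ G.neighborFinset v)
    (hmax : ∀ u ∈ G.neighborFinset v, keyf hG r c v u ≤ keyf hG r c v ym) :
    ∑ u ∈ G.neighborFinset v, Wf hG r c v u = Ff hG r c v ym := by
  rw [← Finset.filter_true_of_mem hmax]
  exact telescope hc1 hc2 _ v ym hym le_rfl

lemma filtered_sum (v y : V) (hyv : y ∈ G.neighborFinset v) :
    (∑ u : V, if (u ∈ G.neighborFinset v ∧ 0 < Wf hG r c v u) ∧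
        keyf hG r c v u ≤ keyf hG r c v y then Wf hG r c v u else 0) = Ff hG r c v y := by
  rw [← Finset.sum_filter]
  have hset : (Finset.univ.filter (fun u => (u ∈ G.neighborFinset v ∧ 0 < Wf hG r c v u) ∧
      keyf hG r c v u ≤ keyf hG r c v y)) =
      ((G.neighborFinset v).filter (fun u => keyf hG r c v u ≤ keyf hG r c v y)).filter
        (fun u => 0 < Wf hG r c v u) := by
    ext u
    simp only [Finset.mem_filter, Finset.mem_univ, true_and]
    tauto
  rw [hset, Finset.sum_filter_of_ne, telescope hc1 hc2 _ v y hyv le_rfl]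
  intro u hu hne
  exact lt_of_le_of_ne (Wf_nonneg hc1 hc2 (Finset.mem_filter.1 hu).1) (Ne.symm hne)

lemma filtered_sum_all (v : V) (hv : (G.neighborFinset v).Nonempty) :
    ∃ ym ∈ G.neighborFinset v,
    (∑ u : V, if u ∈ G.neighborFinset v ∧ 0 < Wf hG r c v u then Wf hG r c v u else 0) =
      Ff hG r c v ym := by
  obtain ⟨ym, hym, hmax⟩ := Finset.exists_max_image _ (keyf hG r c v) hv
  refine ⟨ym, hym, ?_⟩
  rw [← Finset.sum_filter]
  have hset : (Finset.univ.filter (fun u => u ∈ G.neighborFinset v ∧ 0 < Wf hG r c v u)) =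
      (G.neighborFinset v).filter (fun u => 0 < Wf hG r c v u) := by
    ext u
    simp only [Finset.mem_filter, Finset.mem_univ, true_and]
  rw [hset, Finset.sum_filter_of_ne, sum_W_nbr hc1 hc2 v ym hym hmax]
  intro u hu hne
  exact lt_of_le_of_ne (Wf_nonneg hc1 hc2 hu) (Ne.symm hne)

end Analytic

lemma exists_nbr (hG : G.IsTree) (hV : 2 ≤ Fintype.card V) (v : V) :
    (G.neighborFinset v).Nonempty := by
  have : Nonempty V := Fintype.card_pos_iff.1 (by omega)
  obtain ⟨u, hu⟩ := Fintype.exists_ne_of_one_lt_card (by omega) v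
  obtain ⟨p⟩ := hG.isConnected v u
  cases p with
  | nil => exact absurd rfl hu.symm
  | cons h q => exact ⟨_, (SimpleGraph.mem_neighborFinset _ _ _).2 h⟩

set_option maxHeartbeats 4000000 in
theorem main {V : Type*} [Fintype V] (G : SimpleGraph V)
    (hG : G.IsTree) (hV : 2 ≤ Fintype.card V) (c : ℕ)
    (hc : IsGreatest {n : ℕ | ∃ X : Finset V, IsTreeCore G X ∧ X.card = n} c) :
    starCoverRate G ≤ 2 - 1 / (c : ℝ) := by
  classical
  have hne : Nonempty V := Fintype.card_pos_iff.1 (by omega)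
  obtain ⟨r⟩ := hne
  haveI : Nonempty V := ⟨r⟩
  have hc1 : 1 ≤ c := by
    obtain ⟨X, hX, hXc⟩ := hc.1
    have hXne : Nonempty (X : Set V) := hX.1.nonempty
    obtain ⟨⟨x, hx⟩⟩ := hXne
    have : 0 < X.card := Finset.card_pos.2 ⟨x, hx⟩
    omega
  have hc2 : ∀ X : Finset V, IsTreeCore G X → X.card ≤ c := fun X hX => hc.2 ⟨X, hX, rfl⟩
  obtain ⟨b0, hb0⟩ := exists_nbr hG hV r
  set S0 : GraphStar G := ⟨r, {b0}, ⟨b0, Finset.mem_singleton_self b0⟩,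
    fun u hu => by
      rw [Finset.mem_singleton] at hu
      subst hu
      exact (SimpleGraph.mem_neighborFinset _ _ _).1 hb0⟩ with hS0
  set J : Finset (V × V) := Finset.univ.filter
    (fun p => p.2 ∈ G.neighborFinset p.1 ∧ 0 < Wf hG r c p.1 p.2) with hJdef
  set n := J.card with hn
  set e := J.equivFin with he
  have hkey : ∀ p : V × V, p ∈ J →
      p.2 ∈ G.neighborFinset p.1 ∧ 0 < Wf hG r c p.1 p.2 := by
    intro p hp
    rw [hJdef, Finset.mem_filter] at hp
    exact hp.2
  rw [starCoverRate]
  apply csInf_le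
  · refine ⟨0, ?_⟩
    rintro rr ⟨m, st, w, hpos, hcov, hload⟩
    refine le_trans ?_ (hload (Classical.arbitrary V))
    apply Finset.sum_nonneg
    intro i _
    split_ifs
    · exact le_of_lt (hpos i)
    · exact le_rfl
  · refine ⟨n, fun i => stf hG r c S0 ((e.symm i) : V × V),
      fun i => Wf hG r c ((e.symm i) : V × V).1 ((e.symm i) : V × V).2, ?_, ?_, ?_⟩
    · intro i
      exact (hkey _ (e.symm i).2).2
    · -- edge coverage
      intro x y hxy
      have htrans : ∀ P : GraphStar G → Prop,
          (∑ i : Fin n, if P (stf hG r c S0 ((e.symm i) : V × V)) then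
            Wf hG r c ((e.symm i) : V × V).1 ((e.symm i) : V × V).2 else 0) =
          ∑ p ∈ J, (if P (stf hG r c S0 p) then Wf hG r c p.1 p.2 else 0) := by
        intro P
        rw [Equiv.sum_comp e.symm
          (fun a : {z // z ∈ J} => if P (stf hG r c S0 (a : V × V)) then
            Wf hG r c (a : V × V).1 (a : V × V).2 else 0), Finset.univ_eq_attach]
        exact Finset.sum_attach J
          (fun p => if P (stf hG r c S0 p) then Wf hG r c p.1 p.2 else 0)
      beta_reduce
      rw [htrans (fun S => S.memE x y)]
      have hJs : (∑ p ∈ J, if (stf hG r c S0 p).memE x y then Wf hG r c p.1 p.2 else 0) =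
          ∑ p : V × V, if (p.2 ∈ G.neighborFinset p.1 ∧ 0 < Wf hG r c p.1 p.2) ∧
            (stf hG r c S0 p).memE x y then Wf hG r c p.1 p.2 else 0 := by
        rw [hJdef, Finset.sum_filter]
        apply Finset.sum_congr rfl
        intro p _
        by_cases h1 : p.2 ∈ G.neighborFinset p.1 ∧ 0 < Wf hG r c p.1 p.2 <;>
          by_cases h2 : (stf hG r c S0 p).memE x y <;> simp [h1, h2]
      rw [hJs, Fintype.sum_prod_type]
      have hxyn : x ≠ y := G.ne_of_adj hxy
      have hyx : y ∈ G.neighborFinset x := (SimpleGraph.mem_neighborFinset _ _ _).2 hxy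
      have hxy' : x ∈ G.neighborFinset y := (SimpleGraph.mem_neighborFinset _ _ _).2 hxy.symm
      have hvan : ∀ v ∈ Finset.univ, v ∉ ({x, y} : Finset V) →
          (∑ u : V, if ((v, u).2 ∈ G.neighborFinset (v, u).1 ∧
            0 < Wf hG r c (v, u).1 (v, u).2) ∧
            (stf hG r c S0 (v, u)).memE x y then Wf hG r c (v, u).1 (v, u).2 else 0) = 0 := by
        intro v _ hv
        rw [Finset.mem_insert, Finset.mem_singleton] at hv
        push_neg at hv
        apply Finset.sum_eq_zero
        intro u _
        rw [if_neg]
        rintro ⟨⟨h1, -⟩, h2⟩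
        rw [stf_memE h1] at h2
        rcases h2 with ⟨h3, -⟩ | ⟨h3, -⟩
        exacts [hv.1 h3.symm, hv.2 h3.symm]
      rw [← Finset.sum_subset (Finset.subset_univ ({x, y} : Finset V)) hvan,
        Finset.sum_pair hxyn]
      have hgx : (∑ u : V, if ((x, u).2 ∈ G.neighborFinset (x, u).1 ∧
          0 < Wf hG r c (x, u).1 (x, u).2) ∧
          (stf hG r c S0 (x, u)).memE x y then Wf hG r c (x, u).1 (x, u).2 else 0) =
          Ff hG r c x y := by
        rw [← filtered_sum hc1 hc2 x y hyx]
        apply Finset.sum_congr rfl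
        intro u _
        apply if_congr _ rfl rfl
        constructor
        · rintro ⟨⟨h1, h2⟩, h3⟩
          rw [stf_memE h1] at h3
          rcases h3 with ⟨-, h4⟩ | ⟨h4, -⟩
          · exact ⟨⟨h1, h2⟩, (Finset.mem_filter.1 h4).2⟩
          · exact absurd h4.symm hxyn
        · rintro ⟨⟨h1, h2⟩, h3⟩
          exact ⟨⟨h1, h2⟩, (stf_memE h1).2 (Or.inl ⟨rfl, Finset.mem_filter.2 ⟨hyx, h3⟩⟩)⟩
      have hgy : (∑ u : V, if ((y, u).2 ∈ G.neighborFinset (y, u).1 ∧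
          0 < Wf hG r c (y, u).1 (y, u).2) ∧
          (stf hG r c S0 (y, u)).memE x y then Wf hG r c (y, u).1 (y, u).2 else 0) =
          Ff hG r c y x := by
        rw [← filtered_sum hc1 hc2 y x hxy']
        apply Finset.sum_congr rfl
        intro u _
        apply if_congr _ rfl rfl
        constructor
        · rintro ⟨⟨h1, h2⟩, h3⟩
          rw [stf_memE h1] at h3
          rcases h3 with ⟨h4, -⟩ | ⟨-, h4⟩
          · exact absurd h4.symm hxyn.symm
          · exact ⟨⟨h1, h2⟩, (Finset.mem_filter.1 h4).2⟩
        · rintro ⟨⟨h1, h2⟩, h3⟩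
          exact ⟨⟨h1, h2⟩, (stf_memE h1).2 (Or.inr ⟨rfl, Finset.mem_filter.2 ⟨hxy', h3⟩⟩)⟩
      rw [hgx, hgy, cover_one hc1 hc2 hxy]
    · -- vertex load
      intro x
      have htrans : ∀ P : GraphStar G → Prop,
          (∑ i : Fin n, if P (stf hG r c S0 ((e.symm i) : V × V)) then
            Wf hG r c ((e.symm i) : V × V).1 ((e.symm i) : V × V).2 else 0) =
          ∑ p ∈ J, (if P (stf hG r c S0 p) then Wf hG r c p.1 p.2 else 0) := by
        intro P
        rw [Equiv.sum_comp e.symm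
          (fun a : {z // z ∈ J} => if P (stf hG r c S0 (a : V × V)) then
            Wf hG r c (a : V × V).1 (a : V × V).2 else 0), Finset.univ_eq_attach]
        exact Finset.sum_attach J
          (fun p => if P (stf hG r c S0 p) then Wf hG r c p.1 p.2 else 0)
      beta_reduce
      rw [htrans (fun S => S.memV x)]
      have hJs : (∑ p ∈ J, if (stf hG r c S0 p).memV x then Wf hG r c p.1 p.2 else 0) =
          ∑ p : V × V, if (p.2 ∈ G.neighborFinset p.1 ∧ 0 < Wf hG r c p.1 p.2) ∧
            (stf hG r c S0 p).memV x then Wf hG r c p.1 p.2 else 0 := by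
        rw [hJdef, Finset.sum_filter]
        apply Finset.sum_congr rfl
        intro p _
        by_cases h1 : p.2 ∈ G.neighborFinset p.1 ∧ 0 < Wf hG r c p.1 p.2 <;>
          by_cases h2 : (stf hG r c S0 p).memV x <;> simp [h1, h2]
      rw [hJs, Fintype.sum_prod_type]
      have hvan : ∀ v ∈ Finset.univ, v ∉ insert x (G.neighborFinset x) →
          (∑ u : V, if ((v, u).2 ∈ G.neighborFinset (v, u).1 ∧
            0 < Wf hG r c (v, u).1 (v, u).2) ∧
            (stf hG r c S0 (v, u)).memV x then Wf hG r c (v, u).1 (v, u).2 else 0) = 0 := by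
        intro v _ hv
        rw [Finset.mem_insert] at hv
        push_neg at hv
        apply Finset.sum_eq_zero
        intro u _
        rw [if_neg]
        rintro ⟨⟨h1, -⟩, h2⟩
        rw [stf_memV h1] at h2
        rcases h2 with h3 | h3
        · exact hv.1 h3.symm
        · have h4 := (Finset.mem_filter.1 h3).1
          rw [SimpleGraph.mem_neighborFinset] at h4
          exact hv.2 ((SimpleGraph.mem_neighborFinset _ _ _).2 h4.symm)
      rw [← Finset.sum_subset (Finset.subset_univ (insert x (G.neighborFinset x))) hvan,
        Finset.sum_insert (by simp [SimpleGraph.mem_neighborFinset])]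
      obtain ⟨ym, hym, hymeq⟩ := filtered_sum_all hc1 hc2 x (exists_nbr hG hV x)
      have hgx : (∑ u : V, if ((x, u).2 ∈ G.neighborFinset (x, u).1 ∧
          0 < Wf hG r c (x, u).1 (x, u).2) ∧
          (stf hG r c S0 (x, u)).memV x then Wf hG r c (x, u).1 (x, u).2 else 0) =
          Ff hG r c x ym := by
        rw [← hymeq]
        apply Finset.sum_congr rfl
        intro u _
        apply if_congr _ rfl rfl
        constructor
        · rintro ⟨⟨h1, h2⟩, -⟩
          exact ⟨h1, h2⟩
        · rintro ⟨h1, h2⟩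
          exact ⟨⟨h1, h2⟩, (stf_memV h1).2 (Or.inl rfl)⟩
      have hrest : ∀ v ∈ G.neighborFinset x,
          (∑ u : V, if ((v, u).2 ∈ G.neighborFinset (v, u).1 ∧
          0 < Wf hG r c (v, u).1 (v, u).2) ∧
          (stf hG r c S0 (v, u)).memV x then Wf hG r c (v, u).1 (v, u).2 else 0) =
          Ff hG r c v x := by
        intro v hvx
        have hxv : x ∈ G.neighborFinset v := by
          rw [SimpleGraph.mem_neighborFinset] at hvx ⊢
          exact hvx.symm
        have hvnex : x ≠ v := by
          rw [SimpleGraph.mem_neighborFinset] at hvx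
          exact G.ne_of_adj hvx
        rw [← filtered_sum hc1 hc2 v x hxv]
        apply Finset.sum_congr rfl
        intro u _
        apply if_congr _ rfl rfl
        constructor
        · rintro ⟨⟨h1, h2⟩, h3⟩
          rw [stf_memV h1] at h3
          rcases h3 with h4 | h4
          · exact absurd h4 hvnex
          · exact ⟨⟨h1, h2⟩, (Finset.mem_filter.1 h4).2⟩
        · rintro ⟨⟨h1, h2⟩, h3⟩
          exact ⟨⟨h1, h2⟩, (stf_memV h1).2 (Or.inr (Finset.mem_filter.2 ⟨hxv, h3⟩))⟩
      rw [hgx, Finset.sum_congr rfl hrest]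
      exact load_bound hc1 hc2 hym

end StarPf


/-- for a tree with at least 2 vertices whose maximum core size is
`c`, the star cover rate is at most `2 - 1/c`. -/
theorem starCoverRate_le {V : Type*} [Fintype V] (G : SimpleGraph V)
    (hG : G.IsTree) (hV : 2 ≤ Fintype.card V) (c : ℕ)
    (hc : IsGreatest {n : ℕ | ∃ X : Finset V, IsTreeCore G X ∧ X.card = n} c) :
    starCoverRate G ≤ 2 - 1 / (c : ℝ) :=
  StarPf.main G hG hV c hc
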